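/- Let β ∈ (0,2) and define the radial function v on H^n by v(g) = Σ_{m=0}^∞ |g|^{βm} / (m! β^{2m} Γ((Q−2)/β + m + 1)). Then v solves the equation −Δ_{H^n} v + |g|^{β−2} ψ(g) v = 0 on H^n \ {0}, where ψ(g) = |x|^2/|g|^2. -/

import Mathlib

open MeasureTheory Real

/-- The Heisenberg group `ℍⁿ`, identified with `ℝⁿ × ℝⁿ × ℝ`
(so that `x_{n+j}` of the paper is the second factor). -/
abbrev Hn (n : ℕ) := (Fin n → ℝ) × (Fin n → ℝ) × ℝ

namespace Heisenberg

variable {n : ℕ}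

/-- Group multiplication on the Heisenberg group. -/
noncomputable def hmul (g h : Hn n) : Hn n :=
  (g.1 + h.1, g.2.1 + h.2.1,
    g.2.2 + h.2.2 + 2 * ∑ j, (g.2.1 j * h.1 j - g.1 j * h.2.1 j))

/-- Group inverse on the Heisenberg group. -/
def hinv (g : Hn n) : Hn n := (-g.1, -g.2.1, -g.2.2)

/-- The homogeneous norm `|(x,t)| = (|x|⁴ + |t|²)^{1/4}`. -/
noncomputable def hnorm (g : Hn n) : ℝ :=
  ((∑ j, g.1 j ^ 2 + ∑ j, g.2.1 j ^ 2) ^ 2 + g.2.2 ^ 2) ^ ((1 : ℝ) / 4)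

/-- Left-invariant distance `d(g,h) = |g⁻¹ h|`. -/
noncomputable def dist' (g h : Hn n) : ℝ := hnorm (hmul (hinv g) h)

/-- The ball `B(g,r)` for the left-invariant distance. -/
def ball (g : Hn n) (r : ℝ) : Set (Hn n) := {h | dist' g h < r}

/-- The homogeneous dimension `Q = 2n + 2`. -/
noncomputable def Qd (n : ℕ) : ℝ := 2 * n + 2

/-- Anisotropic dilations `δ_r(x,t) = (r x, r² t)`. -/
noncomputable def hdil (r : ℝ) (g : Hn n) : Hn n := (r • g.1, r • g.2.1, r ^ 2 * g.2.2)

/-- The function `ψ(g) = |x|²/|g|²`. -/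
noncomputable def psi (g : Hn n) : ℝ :=
  (∑ j, g.1 j ^ 2 + ∑ j, g.2.1 j ^ 2) / hnorm g ^ 2

/-- The reverse Hölder class `B_q`: `V` is nonnegative, locally `L^q`, and satisfies
`(|B|⁻¹ ∫_B V^q)^{1/q} ≤ C |B|⁻¹ ∫_B V` uniformly over all balls. -/
def RevHolder (n : ℕ) (V : Hn n → ℝ) (q : ℝ) : Prop :=
  (∀ g, 0 ≤ V g) ∧
  (∀ (g : Hn n) (r : ℝ), 0 < r → IntegrableOn (fun h => V h ^ q) (ball g r) volume) ∧
  (∀ (g : Hn n) (r : ℝ), 0 < r → IntegrableOn V (ball g r) volume) ∧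
  ∃ C > 0, ∀ (g : Hn n) (r : ℝ), 0 < r →
    (((volume (ball g r)).toReal)⁻¹ * ∫ h in ball g r, V h ^ q) ^ (1 / q) ≤
      C * (((volume (ball g r)).toReal)⁻¹ * ∫ h in ball g r, V h)

/-- The auxiliary function `ρ(g) = sup { r > 0 : r^{-(Q-2)} ∫_{B(g,r)} V ≤ 1 }`. -/
noncomputable def rho (V : Hn n → ℝ) (g : Hn n) : ℝ :=
  sSup {r : ℝ | 0 < r ∧ r ^ (-(Qd n - 2)) * ∫ h in ball g r, V h ≤ 1}

end Heisenberg

namespace Heisenberg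

variable {n : ℕ}

/-- The left-invariant vector field `X_j = ∂_{x_j} + 2 x_{n+j} ∂_t` acting on functions. -/
noncomputable def XA (j : Fin n) (f : Hn n → ℝ) (g : Hn n) : ℝ :=
  fderiv ℝ f g (Pi.single j 1, 0, 2 * g.2.1 j)

/-- The left-invariant vector field `X_{n+j} = ∂_{x_{n+j}} - 2 x_j ∂_t` acting on functions. -/
noncomputable def XB (j : Fin n) (f : Hn n → ℝ) (g : Hn n) : ℝ :=
  fderiv ℝ f g (0, Pi.single j 1, -(2 * g.1 j))

/-- The sub-Laplacian `Δ_{ℍⁿ} = Σ_{j=1}^{2n} X_j²`. -/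
noncomputable def subLap (f : Hn n → ℝ) (g : Hn n) : ℝ :=
  ∑ j, XA j (XA j f) g + ∑ j, XB j (XB j f) g

/-- The squared length `|∇_{ℍⁿ} f|²` of the horizontal gradient. -/
noncomputable def gradSq (f : Hn n → ℝ) (g : Hn n) : ℝ :=
  ∑ j, (XA j f g) ^ 2 + ∑ j, (XB j f g) ^ 2

end Heisenberg

namespace Heisenberg

/-- The radial solution `v(g) = Σ_m |g|^{βm}/(m! β^{2m} Γ((Q-2)/β + m + 1))`. -/
noncomputable def vSol (n : ℕ) (β : ℝ) (g : Hn n) : ℝ :=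
  ∑' m : ℕ, hnorm g ^ (β * (m : ℝ)) /
    ((m.factorial : ℝ) * β ^ (2 * m) * Real.Gamma ((Qd n - 2) / β + m + 1))


section OneVar

noncomputable def cc (β κ : ℝ) (m : ℕ) : ℝ :=
  (m.factorial : ℝ) * β ^ (2 * m) * Real.Gamma (κ + m + 1)

variable {β κ : ℝ}

lemma cc_pos (hβ : 0 < β) (hκ : 0 < κ) (m : ℕ) : 0 < cc β κ m := by
  have : (0:ℝ) < κ + m + 1 := by positivity
  have := Real.Gamma_pos_of_pos this
  unfold cc
  positivity

lemma cc_rec (m : ℕ) (hκ : 0 < κ) :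
    cc β κ (m + 1) = β ^ 2 * (m + 1) * (κ + m + 1) * cc β κ m := by
  have h1 : Real.Gamma (κ + (m+1 : ℕ) + 1) = (κ + m + 1) * Real.Gamma (κ + m + 1) := by
    have he : κ + ((m : ℝ) + 1) + 1 = (κ + m + 1) + 1 := by ring
    push_cast
    rw [he]
    conv_lhs => rw [Real.Gamma_add_one (by positivity : κ + (m:ℝ) + 1 ≠ 0)]
  unfold cc
  rw [h1, Nat.factorial_succ]
  push_cast
  rw [pow_mul, pow_mul, pow_succ]
  ring

lemma Gamma_lower (hκ : 0 < κ) (m : ℕ) : Real.Gamma (κ + 1) ≤ Real.Gamma (κ + m + 1) := by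
  induction m with
  | zero => simp
  | succ k ih =>
    have hpos : (0:ℝ) < κ + k + 1 := by positivity
    have hG := Real.Gamma_pos_of_pos hpos
    calc Real.Gamma (κ + 1) ≤ Real.Gamma (κ + k + 1) := ih
    _ ≤ (κ + k + 1) * Real.Gamma (κ + k + 1) := by
        nlinarith [Nat.cast_nonneg (α := ℝ) k]
    _ = Real.Gamma (κ + (k+1:ℕ) + 1) := by
        push_cast
        rw [show κ + ((k:ℝ)+1) + 1 = (κ + k + 1) + 1 by ring]
        conv_rhs => rw [Real.Gamma_add_one (ne_of_gt hpos)]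

lemma summable_aux (hβ : 0 < β) (hκ : 0 < κ) {L : ℝ} (hL : 0 ≤ L) :
    Summable fun m : ℕ => ((m:ℝ) + 1) ^ 2 * L ^ m / cc β κ m := by
  have hG1 : 0 < Real.Gamma (κ + 1) := Real.Gamma_pos_of_pos (by positivity)
  refine Summable.of_nonneg_of_le
    (fun m => div_nonneg (by positivity) (cc_pos hβ hκ m).le)
    (fun m => ?_) (((Real.summable_pow_div_factorial (4*L/β^2)).mul_left (4 / Real.Gamma (κ+1))))
  have hp : (1:ℝ) ≤ 2 ^ m := one_le_pow₀ (by norm_num : (1:ℝ) ≤ 2)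
  have key : ((m:ℝ)+1)^2 * L^m / cc β κ m ≤ 4 * 4^m * L^m / ((m.factorial : ℝ) * β^(2*m) * Real.Gamma (κ+1)) := by
    apply div_le_div₀ (by positivity) ?_ (by positivity) ?_
    · have h1 : (m:ℝ) + 1 ≤ 2 * 2 ^ m := by
        have h2 : (m:ℝ) < 2 ^ m := by exact_mod_cast (Nat.lt_two_pow_self (n := m))
        linarith
      have h2 : ((m:ℝ)+1)^2 ≤ 4 * 4^m := by
        have h0 : (0:ℝ) ≤ (m:ℝ) + 1 := by positivity
        calc ((m:ℝ)+1)^2 ≤ (2 * 2^m)^2 := by nlinarith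
        _ = 4 * 4^m := by
            rw [mul_pow, ← pow_mul, mul_comm m 2, pow_mul]; norm_num
      have := pow_nonneg hL m
      nlinarith
    · unfold cc
      have := Gamma_lower hκ m
      have h2 : (0:ℝ) < (m.factorial : ℝ) * β^(2*m) := by positivity
      nlinarith
  refine key.trans (le_of_eq ?_)
  rw [div_pow, mul_pow, pow_mul]
  have hb : ((β:ℝ)^2)^m ≠ 0 := by positivity
  have hf : ((m.factorial : ℝ)) ≠ 0 := by positivity
  field_simp

noncomputable def GG (β κ : ℝ) (s : ℝ) : ℝ := ∑' m : ℕ, s ^ (β * m / 4) / cc β κ m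
noncomputable def GG1 (β κ : ℝ) (s : ℝ) : ℝ :=
  ∑' m : ℕ, (β * m / 4) * s ^ (β * m / 4 - 1) / cc β κ m
noncomputable def GG2 (β κ : ℝ) (s : ℝ) : ℝ :=
  ∑' m : ℕ, ((β * m / 4) * (β * m / 4 - 1)) * s ^ (β * m / 4 - 2) / cc β κ m

lemma summable_bound (hβ : 0 < β) (hκ : 0 < κ) {f : ℕ → ℝ} {C L : ℝ} (hL : 0 ≤ L)
    (h : ∀ m : ℕ, |f m| ≤ C * (((m:ℝ) + 1) ^ 2 * L ^ m / cc β κ m)) : Summable f :=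
  Summable.of_norm_bounded ((summable_aux hβ hκ hL).mul_left C)
    (by simpa [Real.norm_eq_abs] using h)

lemma rpow_term {s : ℝ} (hs : 0 ≤ s) (b : ℝ) (m : ℕ) :
    s ^ (b * m / 4) = (s ^ (b / 4)) ^ m := by
  rw [← Real.rpow_natCast (s ^ (b/4)) m, ← Real.rpow_mul hs]
  congr 1
  ring

lemma summable_G0 (hβ : 0 < β) (hκ : 0 < κ) {s : ℝ} (hs : 0 < s) :
    Summable fun m : ℕ => s ^ (β * m / 4) / cc β κ m := by
  refine summable_bound hβ hκ (L := s ^ (β/4)) (C := 1) (Real.rpow_nonneg hs.le _) fun m => ?_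
  rw [rpow_term hs.le, abs_of_nonneg (div_nonneg (by positivity) (cc_pos hβ hκ m).le), one_mul]
  have h1 : (1:ℝ) ≤ ((m:ℝ)+1)^2 := by nlinarith [Nat.cast_nonneg (α := ℝ) m]
  have h2 : (0:ℝ) < cc β κ m := cc_pos hβ hκ m
  have h3 : (0:ℝ) ≤ (s ^ (β/4)) ^ m := by positivity
  apply div_le_div₀ (by positivity) (by nlinarith) h2 le_rfl

lemma summable_G1 (hβ : 0 < β) (hκ : 0 < κ) {s : ℝ} (hs : 0 < s) :
    Summable fun m : ℕ => (β * m / 4) * s ^ (β * m / 4 - 1) / cc β κ m := by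
  refine summable_bound hβ hκ (L := s ^ (β/4)) (C := β / 4 * s⁻¹)
    (Real.rpow_nonneg hs.le _) fun m => ?_
  have h2 : (0:ℝ) < cc β κ m := cc_pos hβ hκ m
  rw [abs_of_nonneg (by positivity), Real.rpow_sub hs, Real.rpow_one, rpow_term hs.le]
  have h1 : (m:ℝ) ≤ ((m:ℝ)+1)^2 := by nlinarith [Nat.cast_nonneg (α := ℝ) m]
  have h3 : (0:ℝ) ≤ (s ^ (β/4)) ^ m := by positivity
  have key : β * ↑m / 4 * ((s ^ (β/4)) ^ m / s) ≤ β / 4 * s⁻¹ * (((m:ℝ)+1)^2 * (s ^ (β/4)) ^ m) := by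
    have h5 : (m:ℝ) * (s ^ (β/4)) ^ m ≤ ((m:ℝ)+1)^2 * (s ^ (β/4)) ^ m :=
      mul_le_mul_of_nonneg_right h1 h3
    calc β * ↑m / 4 * ((s ^ (β/4)) ^ m / s) = β / 4 * s⁻¹ * ((m:ℝ) * (s ^ (β/4)) ^ m) := by
          ring
      _ ≤ β / 4 * s⁻¹ * (((m:ℝ)+1)^2 * (s ^ (β/4)) ^ m) :=
          mul_le_mul_of_nonneg_left h5 (by positivity)
  conv_rhs => rw [← mul_div_assoc]
  exact div_le_div₀ (by positivity) key h2 le_rfl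

lemma summable_G2 (hβ : 0 < β) (hβ₂ : β < 2) (hκ : 0 < κ) {s : ℝ} (hs : 0 < s) :
    Summable fun m : ℕ =>
      ((β * m / 4) * (β * m / 4 - 1)) * s ^ (β * m / 4 - 2) / cc β κ m := by
  refine summable_bound hβ hκ (L := s ^ (β/4)) (C := (s⁻¹)^2)
    (Real.rpow_nonneg hs.le _) fun m => ?_
  have h2 : (0:ℝ) < cc β κ m := cc_pos hβ hκ m
  have ha : (0:ℝ) ≤ β * m / 4 := by positivity
  have haux : |(β * m / 4) * (β * m / 4 - 1)| ≤ ((m:ℝ)+1)^2 := by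
    have hm : (0:ℝ) ≤ (m:ℝ) := Nat.cast_nonneg m
    have h5 : β * m / 4 ≤ (m:ℝ) := by nlinarith
    have h6 : |β * m / 4 - 1| ≤ (m:ℝ) + 1 := by
      rw [abs_le]; constructor <;> nlinarith
    calc |(β * m / 4) * (β * m / 4 - 1)| = (β * m / 4) * |β * m / 4 - 1| := by
          rw [abs_mul, abs_of_nonneg ha]
      _ ≤ ((m:ℝ)+1) * ((m:ℝ)+1) := by
          apply mul_le_mul (by linarith) h6 (abs_nonneg _) (by linarith)
      _ = ((m:ℝ)+1)^2 := (sq ((m:ℝ)+1)).symm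
  have hrw : s ^ (β * m / 4 - 2) = (s ^ (β/4)) ^ m * ((s⁻¹)^2) := by
    rw [show β * (m:ℝ) / 4 - 2 = β * m / 4 + (-2) from by ring, Real.rpow_add hs,
      rpow_term hs.le]
    congr 1
    rw [show (-2 : ℝ) = -(2:ℕ) from by norm_num, Real.rpow_neg hs.le, Real.rpow_natCast,
      inv_pow]
  rw [abs_div, abs_of_pos h2, abs_mul, abs_of_nonneg (Real.rpow_nonneg hs.le _), hrw]
  have h3 : (0:ℝ) ≤ (s ^ (β/4)) ^ m := by positivity
  have key : |(β * ↑m / 4) * (β * ↑m / 4 - 1)| * ((s ^ (β/4)) ^ m * (s⁻¹)^2)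
      ≤ (s⁻¹)^2 * (((m:ℝ)+1)^2 * (s ^ (β/4)) ^ m) := by
    have h5 := mul_le_mul_of_nonneg_right haux
      (mul_nonneg h3 (by positivity : (0:ℝ) ≤ (s⁻¹)^2))
    calc |(β * ↑m / 4) * (β * ↑m / 4 - 1)| * ((s ^ (β/4)) ^ m * (s⁻¹)^2)
        ≤ ((m:ℝ)+1)^2 * ((s ^ (β/4)) ^ m * (s⁻¹)^2) := h5
      _ = (s⁻¹)^2 * (((m:ℝ)+1)^2 * (s ^ (β/4)) ^ m) := by ring
  conv_rhs => rw [← mul_div_assoc]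
  exact div_le_div₀ (by positivity) key h2 le_rfl

lemma hasDerivAt_GG (hβ : 0 < β) (hκ : 0 < κ) {s : ℝ} (hs : 0 < s) :
    HasDerivAt (GG β κ) (GG1 β κ s) s := by
  have h2s : (0:ℝ) < 2 * s := by linarith
  have hhalf : (0:ℝ) < s / 2 := by linarith
  set L := (2*s) ^ (β/4) with hL
  have hLnn : 0 ≤ L := Real.rpow_nonneg h2s.le _
  unfold GG GG1
  refine hasDerivAt_tsum_of_isPreconnected
    (g := fun (m : ℕ) z => z ^ (β * m / 4) / cc β κ m)
    (g' := fun (m : ℕ) y => (β * m / 4) * y ^ (β * m / 4 - 1) / cc β κ m)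
    (y₀ := s) (y := s) (t := Set.Ioo (s/2) (2*s))
    (u := fun m : ℕ => (β/4 * (s/2)⁻¹) * (((m:ℝ)+1)^2 * L^m / cc β κ m))
    (((summable_aux hβ hκ hLnn).mul_left _)) isOpen_Ioo
    ((convex_Ioo _ _).isPreconnected) (fun m y hy => ?_) (fun m y hy => ?_)
    (Set.mem_Ioo.2 ⟨by linarith, by linarith⟩) (summable_G0 hβ hκ hs)
    (Set.mem_Ioo.2 ⟨by linarith, by linarith⟩)
  · have hy0 : 0 < y := lt_trans hhalf hy.1
    exact (Real.hasDerivAt_rpow_const (Or.inl (ne_of_gt hy0))).div_const _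
  · have hy0 : 0 < y := lt_trans hhalf hy.1
    have hcc := cc_pos hβ hκ m
    rw [Real.norm_eq_abs, abs_of_nonneg (by positivity), Real.rpow_sub hy0, Real.rpow_one]
    have h1 : (m:ℝ) ≤ ((m:ℝ)+1)^2 := by nlinarith [Nat.cast_nonneg (α := ℝ) m]
    have hy1 : y ^ (β*(m:ℝ)/4) ≤ L^m := by
      rw [hL, ← rpow_term h2s.le β m]
      exact Real.rpow_le_rpow hy0.le (le_of_lt hy.2) (by positivity)
    have hy2 : y⁻¹ ≤ (s/2)⁻¹ := by
      apply inv_anti₀ hhalf hy.1.le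
    have key : β*↑m/4 * (y^(β*↑m/4)/y) ≤ (β/4 * (s/2)⁻¹) * (((m:ℝ)+1)^2 * L^m) := by
      calc β*↑m/4 * (y^(β*↑m/4)/y) = (β/4) * ((m:ℝ) * (y^(β*↑m/4) * y⁻¹)) := by ring
        _ ≤ (β/4) * (((m:ℝ)+1)^2 * (L^m * (s/2)⁻¹)) := by
            apply mul_le_mul_of_nonneg_left _ (by positivity)
            apply mul_le_mul h1 (mul_le_mul hy1 hy2 (by positivity) (pow_nonneg hLnn m))
              (by positivity) (by positivity)
        _ = (β/4 * (s/2)⁻¹) * (((m:ℝ)+1)^2 * L^m) := by ring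
    calc β*↑m/4 * (y^(β*↑m/4)/y) / cc β κ m
        ≤ ((β/4 * (s/2)⁻¹) * (((m:ℝ)+1)^2 * L^m)) / cc β κ m :=
          div_le_div₀ (mul_nonneg (by positivity)
            (mul_nonneg (by positivity) (pow_nonneg hLnn m))) key hcc le_rfl
      _ = (β/4 * (s/2)⁻¹) * (((m:ℝ)+1)^2 * L^m / cc β κ m) := by ring

lemma hasDerivAt_GG1 (hβ : 0 < β) (hβ₂ : β < 2) (hκ : 0 < κ) {s : ℝ} (hs : 0 < s) :
    HasDerivAt (GG1 β κ) (GG2 β κ s) s := by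
  have h2s : (0:ℝ) < 2 * s := by linarith
  have hhalf : (0:ℝ) < s / 2 := by linarith
  set L := (2*s) ^ (β/4) with hL
  have hLnn : 0 ≤ L := Real.rpow_nonneg h2s.le _
  unfold GG1 GG2
  refine hasDerivAt_tsum_of_isPreconnected
    (g := fun (m : ℕ) z => (β * m / 4) * z ^ (β * m / 4 - 1) / cc β κ m)
    (g' := fun (m : ℕ) y => ((β * m / 4) * (β * m / 4 - 1)) * y ^ (β * m / 4 - 2) / cc β κ m)
    (y₀ := s) (y := s) (t := Set.Ioo (s/2) (2*s))
    (u := fun m : ℕ => (((s/2)⁻¹)^2) * (((m:ℝ)+1)^2 * L^m / cc β κ m))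
    (((summable_aux hβ hκ hLnn).mul_left _)) isOpen_Ioo
    ((convex_Ioo _ _).isPreconnected) (fun m y hy => ?_) (fun m y hy => ?_)
    (Set.mem_Ioo.2 ⟨by linarith, by linarith⟩) (summable_G1 hβ hκ hs)
    (Set.mem_Ioo.2 ⟨by linarith, by linarith⟩)
  · have hy0 : 0 < y := lt_trans hhalf hy.1
    have := ((Real.hasDerivAt_rpow_const (x := y) (p := β*(m:ℝ)/4 - 1)
      (Or.inl (ne_of_gt hy0))).const_mul (β*(m:ℝ)/4)).div_const (cc β κ m)
    refine this.congr_deriv ?_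
    rw [show β*(m:ℝ)/4 - 1 - 1 = β*(m:ℝ)/4 - 2 from by ring]
    ring
  · have hy0 : 0 < y := lt_trans hhalf hy.1
    have hcc := cc_pos hβ hκ m
    have hm : (0:ℝ) ≤ (m:ℝ) := Nat.cast_nonneg m
    have haux : |(β * (m:ℝ) / 4) * (β * (m:ℝ) / 4 - 1)| ≤ ((m:ℝ)+1)^2 := by
      have h5 : β * (m:ℝ) / 4 ≤ (m:ℝ) := by nlinarith
      have h6 : |β * (m:ℝ) / 4 - 1| ≤ (m:ℝ) + 1 := by
        rw [abs_le]; constructor <;> nlinarith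
      calc |(β * (m:ℝ) / 4) * (β * (m:ℝ) / 4 - 1)|
          = (β * (m:ℝ) / 4) * |β * (m:ℝ) / 4 - 1| := by
            rw [abs_mul, abs_of_nonneg (by positivity)]
        _ ≤ ((m:ℝ)+1) * ((m:ℝ)+1) :=
            mul_le_mul (by linarith) h6 (abs_nonneg _) (by linarith)
        _ = ((m:ℝ)+1)^2 := (sq ((m:ℝ)+1)).symm
    have hy1 : y ^ (β*(m:ℝ)/4) ≤ L^m := by
      rw [hL, ← rpow_term h2s.le β m]
      exact Real.rpow_le_rpow hy0.le (le_of_lt hy.2) (by positivity)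
    have hy2 : (y⁻¹)^2 ≤ ((s/2)⁻¹)^2 := by
      apply pow_le_pow_left₀ (by positivity) (inv_anti₀ hhalf hy.1.le)
    have hrw : y ^ (β * (m:ℝ) / 4 - 2) = y ^ (β*(m:ℝ)/4) * (y⁻¹)^2 := by
      rw [show β * (m:ℝ) / 4 - 2 = β * (m:ℝ) / 4 + (-2) from by ring, Real.rpow_add hy0]
      congr 1
      rw [show (-2 : ℝ) = -(2:ℕ) from by norm_num, Real.rpow_neg hy0.le, Real.rpow_natCast,
        inv_pow]
    rw [Real.norm_eq_abs, abs_div, abs_of_pos hcc, abs_mul,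
      abs_of_nonneg (Real.rpow_nonneg hy0.le _), hrw]
    have key : |(β * (m:ℝ) / 4) * (β * (m:ℝ) / 4 - 1)| * (y ^ (β*(m:ℝ)/4) * (y⁻¹)^2)
        ≤ (((s/2)⁻¹)^2) * (((m:ℝ)+1)^2 * L^m) := by
      calc |(β * (m:ℝ) / 4) * (β * (m:ℝ) / 4 - 1)| * (y ^ (β*(m:ℝ)/4) * (y⁻¹)^2)
          ≤ ((m:ℝ)+1)^2 * (L^m * ((s/2)⁻¹)^2) := by
            apply mul_le_mul haux (mul_le_mul hy1 hy2 (by positivity)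
              (pow_nonneg hLnn m)) (by positivity) (by positivity)
        _ = (((s/2)⁻¹)^2) * (((m:ℝ)+1)^2 * L^m) := by ring
    calc |(β * (m:ℝ) / 4) * (β * (m:ℝ) / 4 - 1)| * (y ^ (β*(m:ℝ)/4) * (y⁻¹)^2) / cc β κ m
        ≤ ((((s/2)⁻¹)^2) * (((m:ℝ)+1)^2 * L^m)) / cc β κ m :=
          div_le_div₀ (mul_nonneg (by positivity)
            (mul_nonneg (by positivity) (pow_nonneg hLnn m))) key hcc le_rfl
      _ = (((s/2)⁻¹)^2) * (((m:ℝ)+1)^2 * L^m / cc β κ m) := by ring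

lemma ode_identity (hβ : 0 < β) (hβ₂ : β < 2) (hκ : 0 < κ) {s : ℝ} (hs : 0 < s) :
    16 * s * GG2 β κ s + (4 * β * κ + 16) * GG1 β κ s = s ^ ((β - 4)/4) * GG β κ s := by
  have h0 := summable_G0 hβ hκ (s := s) hs
  have h1 := summable_G1 hβ hκ (s := s) hs
  have h2 := summable_G2 hβ hβ₂ hκ (s := s) hs
  set D : ℕ → ℝ := fun m => (β*m) * (β*m + β*κ) * s^(β*m/4 - 1)/cc β κ m with hD
  have hDsum : Summable D := by
    refine summable_bound hβ hκ (L := s ^ (β/4)) (C := 4*(1+κ)*s⁻¹)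
      (Real.rpow_nonneg hs.le _) fun m => ?_
    have hcc := cc_pos hβ hκ m
    have hm : (0:ℝ) ≤ (m:ℝ) := Nat.cast_nonneg m
    have hrw : s ^ (β * (m:ℝ) / 4 - 1) = (s ^ (β/4)) ^ m * s⁻¹ := by
      rw [Real.rpow_sub hs, Real.rpow_one, rpow_term hs.le, div_eq_mul_inv]
    rw [hD]
    dsimp only
    rw [abs_of_nonneg (by positivity), hrw]
    have key : (β*(m:ℝ)) * (β*m + β*κ) * ((s ^ (β/4)) ^ m * s⁻¹)
        ≤ 4*(1+κ)*s⁻¹ * (((m:ℝ)+1)^2 * (s ^ (β/4)) ^ m) := by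
      have hb1 : β*(m:ℝ) * (β*m + β*κ) ≤ 4*(1+κ)*((m:ℝ)+1)^2 := by
        have hb2 : β^2 ≤ 4 := by nlinarith
        have e1 : β^2*((m:ℝ)^2) ≤ 4*((m:ℝ)^2) :=
          mul_le_mul_of_nonneg_right hb2 (by positivity)
        have e2 : β^2*(κ*(m:ℝ)) ≤ 4*(κ*(m:ℝ)) :=
          mul_le_mul_of_nonneg_right hb2 (by positivity)
        have e3 : (m:ℝ)^2 ≤ ((m:ℝ)+1)^2 := by nlinarith
        have e4 : κ*(m:ℝ) ≤ κ*((m:ℝ)+1)^2 := by nlinarith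
        nlinarith [e1, e2, e3, e4]
      have hXs : (0:ℝ) ≤ (s ^ (β/4)) ^ m * s⁻¹ := by positivity
      calc (β*(m:ℝ)) * (β*m + β*κ) * ((s ^ (β/4)) ^ m * s⁻¹)
          ≤ 4*(1+κ)*((m:ℝ)+1)^2 * ((s ^ (β/4)) ^ m * s⁻¹) :=
            mul_le_mul_of_nonneg_right hb1 hXs
        _ = 4*(1+κ)*s⁻¹ * (((m:ℝ)+1)^2 * (s ^ (β/4)) ^ m) := by ring
    calc (β*(m:ℝ)) * (β*m + β*κ) * ((s ^ (β/4)) ^ m * s⁻¹) / cc β κ m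
        ≤ (4*(1+κ)*s⁻¹ * (((m:ℝ)+1)^2 * (s ^ (β/4)) ^ m)) / cc β κ m :=
          div_le_div₀ (by positivity) key hcc le_rfl
      _ = 4*(1+κ)*s⁻¹ * (((m:ℝ)+1)^2 * (s ^ (β/4)) ^ m / cc β κ m) := by ring
  have hLHS : 16 * s * GG2 β κ s + (4*β*κ+16) * GG1 β κ s = ∑' m, D m := by
    unfold GG1 GG2
    rw [← tsum_mul_left, ← tsum_mul_left, ← Summable.tsum_add (h2.mul_left _) (h1.mul_left _)]
    refine tsum_congr fun m => ?_
    have hcc := (cc_pos hβ hκ m).ne'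
    rw [hD]
    dsimp only
    rw [show β*(m:ℝ)/4 - 1 = (β*m/4 - 2) + 1 from by ring, Real.rpow_add hs, Real.rpow_one]
    field_simp
    ring
  have hshift : ∑' m, D m = ∑' m, D (m+1) := by
    rw [Summable.tsum_eq_zero_add hDsum, show D 0 = 0 from by simp [hD], zero_add]
  have hRHS : ∑' m, D (m+1) = s^((β-4)/4) * GG β κ s := by
    unfold GG
    rw [← tsum_mul_left]
    refine tsum_congr fun m => ?_
    have hcc := (cc_pos hβ hκ m).ne'
    have hm1 : ((m:ℝ)+1) ≠ 0 := by positivity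
    have hk1 : (κ+(m:ℝ)+1) ≠ 0 := by positivity
    have hexp : s^((β-4)/4) * s^(β*(m:ℝ)/4) = s^(β*((m:ℝ)+1)/4 - 1) := by
      rw [← Real.rpow_add hs]; congr 1; ring
    rw [hD]
    dsimp only
    rw [cc_rec m hκ]
    push_cast
    conv_rhs => rw [← mul_div_assoc, hexp]
    field_simp
    ring
  rw [hLHS, hshift, hRHS]

end OneVar

section MultiVar

variable {n : ℕ}

/-- `S g = |x|²+|y|²`. -/
noncomputable def Sq (g : Hn n) : ℝ := ∑ j, g.1 j ^ 2 + ∑ j, g.2.1 j ^ 2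

/-- `N g = S g² + t²` so that `hnorm g = (N g)^{1/4}`. -/
noncomputable def NN (g : Hn n) : ℝ := Sq g ^ 2 + g.2.2 ^ 2

lemma hnorm_eq (g : Hn n) : hnorm g = NN g ^ ((1:ℝ)/4) := rfl

lemma Sq_nonneg (g : Hn n) : 0 ≤ Sq g := by
  unfold Sq
  positivity

lemma NN_nonneg (g : Hn n) : 0 ≤ NN g := by unfold NN; positivity

lemma NN_pos (g : Hn n) (hg : g ≠ 0) : 0 < NN g := by
  rcases lt_or_eq_of_le (NN_nonneg g) with h | h
  · exact h
  exfalso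
  apply hg
  have h2 : Sq g ^ 2 + g.2.2 ^ 2 = 0 := h.symm
  have hS : Sq g = 0 := by nlinarith [sq_nonneg (Sq g), sq_nonneg g.2.2]
  have ht : g.2.2 = 0 := by nlinarith [sq_nonneg (Sq g), sq_nonneg g.2.2]
  have hnn1 : (0:ℝ) ≤ ∑ j, g.1 j ^ 2 := Finset.sum_nonneg fun j _ => sq_nonneg _
  have hnn2 : (0:ℝ) ≤ ∑ j, g.2.1 j ^ 2 := Finset.sum_nonneg fun j _ => sq_nonneg _
  unfold Sq at hS
  have h1a : ∑ j, g.1 j ^ 2 = 0 := by linarith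
  have h1b : ∑ j, g.2.1 j ^ 2 = 0 := by linarith
  have hx : ∀ j, g.1 j = 0 ∧ g.2.1 j = 0 := by
    intro j
    constructor
    · have := (Finset.sum_eq_zero_iff_of_nonneg (fun j _ => sq_nonneg (g.1 j))).1 h1a j
        (Finset.mem_univ j)
      exact pow_eq_zero_iff (two_ne_zero) |>.1 this
    · have := (Finset.sum_eq_zero_iff_of_nonneg (fun j _ => sq_nonneg (g.2.1 j))).1 h1b j
        (Finset.mem_univ j)
      exact pow_eq_zero_iff (two_ne_zero) |>.1 this
  refine Prod.ext (funext fun j => (hx j).1) (Prod.ext (funext fun j => (hx j).2) ht)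


noncomputable def PP (j : Fin n) (g : Hn n) : ℝ :=
  4 * (Sq g * g.1 j) + 4 * (g.2.2 * g.2.1 j)

noncomputable def QQ (j : Fin n) (g : Hn n) : ℝ :=
  4 * (Sq g * g.2.1 j) - 4 * (g.2.2 * g.1 j)

lemma line_affine (cst d : ℝ) : HasDerivAt (fun τ : ℝ => cst + τ * d) d 0 := by
  simpa using ((hasDerivAt_id (0:ℝ)).mul_const d).const_add cst

lemma line_Sq (h w : Hn n) :
    HasDerivAt (fun τ : ℝ => Sq (h + τ • w))
      (∑ k, 2 * h.1 k * w.1 k + ∑ k, 2 * h.2.1 k * w.2.1 k) 0 := by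
  have key : (fun τ : ℝ => Sq (h + τ • w)) =
      fun τ => (∑ k, (h.1 k + τ * w.1 k)^2) + ∑ k, (h.2.1 k + τ * w.2.1 k)^2 := rfl
  rw [key]
  have d1 : HasDerivAt (fun τ : ℝ => ∑ k, (h.1 k + τ * w.1 k)^2)
      (∑ k, 2 * h.1 k * w.1 k) 0 := by
    have := HasDerivAt.fun_sum (fun k (_ : k ∈ Finset.univ) => ((line_affine (h.1 k) (w.1 k)).pow 2))
    simpa using this
  have d2 : HasDerivAt (fun τ : ℝ => ∑ k, (h.2.1 k + τ * w.2.1 k)^2)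
      (∑ k, 2 * h.2.1 k * w.2.1 k) 0 := by
    have := HasDerivAt.fun_sum (fun k (_ : k ∈ Finset.univ) => ((line_affine (h.2.1 k) (w.2.1 k)).pow 2))
    simpa using this
  exact d1.add d2

lemma line_NN (h w : Hn n) :
    HasDerivAt (fun τ : ℝ => NN (h + τ • w))
      (2 * Sq h * (∑ k, 2 * h.1 k * w.1 k + ∑ k, 2 * h.2.1 k * w.2.1 k)
        + 2 * h.2.2 * w.2.2) 0 := by
  have key : (fun τ : ℝ => NN (h + τ • w)) =
      fun τ => Sq (h + τ • w)^2 + (h.2.2 + τ * w.2.2)^2 := rfl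
  rw [key]
  have d1 := (line_Sq h w).pow 2
  have d2 := (line_affine h.2.2 w.2.2).pow 2
  have := d1.add d2
  have h0 : h + (0:ℝ) • w = h := by simp
  rw [h0] at this
  refine this.congr_deriv ?_
  simp

lemma line_PP (j : Fin n) (h w : Hn n) :
    HasDerivAt (fun τ : ℝ => PP j (h + τ • w))
      (4 * ((∑ k, 2 * h.1 k * w.1 k + ∑ k, 2 * h.2.1 k * w.2.1 k) * h.1 j + Sq h * w.1 j)
        + 4 * (w.2.2 * h.2.1 j + h.2.2 * w.2.1 j)) 0 := by
  have key : (fun τ : ℝ => PP j (h + τ • w)) =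
      fun τ => 4 * (Sq (h + τ • w) * (h.1 j + τ * w.1 j))
        + 4 * ((h.2.2 + τ * w.2.2) * (h.2.1 j + τ * w.2.1 j)) := rfl
  rw [key]
  have d1 := ((line_Sq h w).mul (line_affine (h.1 j) (w.1 j))).const_mul (4:ℝ)
  have d2 := ((line_affine h.2.2 w.2.2).mul (line_affine (h.2.1 j) (w.2.1 j))).const_mul (4:ℝ)
  have := d1.add d2
  have h0 : h + (0:ℝ) • w = h := by simp
  rw [h0] at this
  refine this.congr_deriv ?_
  simp

lemma line_QQ (j : Fin n) (h w : Hn n) :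
    HasDerivAt (fun τ : ℝ => QQ j (h + τ • w))
      (4 * ((∑ k, 2 * h.1 k * w.1 k + ∑ k, 2 * h.2.1 k * w.2.1 k) * h.2.1 j + Sq h * w.2.1 j)
        - 4 * (w.2.2 * h.1 j + h.2.2 * w.1 j)) 0 := by
  have key : (fun τ : ℝ => QQ j (h + τ • w)) =
      fun τ => 4 * (Sq (h + τ • w) * (h.2.1 j + τ * w.2.1 j))
        - 4 * ((h.2.2 + τ * w.2.2) * (h.1 j + τ * w.1 j)) := rfl
  rw [key]
  have d1 := ((line_Sq h w).mul (line_affine (h.2.1 j) (w.2.1 j))).const_mul (4:ℝ)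
  have d2 := ((line_affine h.2.2 w.2.2).mul (line_affine (h.1 j) (w.1 j))).const_mul (4:ℝ)
  have := d1.sub d2
  have h0 : h + (0:ℝ) • w = h := by simp
  rw [h0] at this
  refine this.congr_deriv ?_
  simp

lemma diff_x (j : Fin n) : Differentiable ℝ (fun h : Hn n => h.1 j) :=
  (ContinuousLinearMap.proj (R := ℝ) (φ := fun _ : Fin n => ℝ) j).differentiable.comp
    differentiable_fst

lemma diff_y (j : Fin n) : Differentiable ℝ (fun h : Hn n => h.2.1 j) :=
  (ContinuousLinearMap.proj (R := ℝ) (φ := fun _ : Fin n => ℝ) j).differentiable.comp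
    differentiable_snd.fst

lemma diff_t : Differentiable ℝ (fun h : Hn n => h.2.2) :=
  differentiable_snd.comp differentiable_snd

lemma diff_Sq : Differentiable ℝ (Sq (n := n)) := by
  apply Differentiable.add
  · exact Differentiable.fun_sum fun j _ => (diff_x j).pow 2
  · exact Differentiable.fun_sum fun j _ => (diff_y j).pow 2

lemma diff_NN : Differentiable ℝ (NN (n := n)) :=
  (diff_Sq.pow 2).add (diff_t.pow 2)

lemma diff_PP (j : Fin n) : Differentiable ℝ (PP j (n := n)) :=
  ((diff_Sq.mul (diff_x j)).const_mul 4).add ((diff_t.mul (diff_y j)).const_mul 4)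

lemma diff_QQ (j : Fin n) : Differentiable ℝ (QQ j (n := n)) :=
  ((diff_Sq.mul (diff_y j)).const_mul 4).sub ((diff_t.mul (diff_x j)).const_mul 4)

lemma fderiv_line {f : Hn n → ℝ} {g w : Hn n} (hf : DifferentiableAt ℝ f g) :
    fderiv ℝ f g w = deriv (fun τ : ℝ => f (g + τ • w)) 0 := by
  have hline : HasDerivAt (fun τ : ℝ => g + τ • w) w 0 := by
    simpa using ((hasDerivAt_id (0:ℝ)).smul_const w).const_add g
  have hfd : HasFDerivAt f (fderiv ℝ f g) ((fun τ : ℝ => g + τ • w) 0) := by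
    simpa using hf.hasFDerivAt
  have h2 : HasDerivAt (fun τ : ℝ => f (g + τ • w)) (fderiv ℝ f g w) 0 :=
    hfd.comp_hasDerivAt 0 hline
  exact h2.deriv.symm

section Formulas

variable {β κ : ℝ}

lemma XA_formula (hβ : 0 < β) (hκ : 0 < κ) (j : Fin n) {h : Hn n} (hh : 0 < NN h) :
    XA j (fun h' => GG β κ (NN h')) h = GG1 β κ (NN h) * PP j h := by
  have hdiff : DifferentiableAt ℝ (fun h' => GG β κ (NN h')) h := by
    have h1 := (hasDerivAt_GG hβ hκ hh).differentiableAt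
    have h2 := diff_NN.differentiableAt (x := h)
    have h3 : DifferentiableAt ℝ (GG β κ ∘ NN) h := DifferentiableAt.comp h h1 h2
    exact h3
  unfold XA
  rw [fderiv_line hdiff]
  set w : Hn n := ((Pi.single j 1 : Fin n → ℝ), (0 : Fin n → ℝ), 2 * h.2.1 j) with hw
  have hG : HasDerivAt (GG β κ) (GG1 β κ (NN h)) ((fun τ : ℝ => NN (h + τ • w)) 0) := by
    simpa using hasDerivAt_GG hβ hκ hh
  have hcomp := hG.comp 0 (line_NN h w)
  rw [Function.comp_def] at hcomp
  have hval : deriv (fun τ : ℝ => GG β κ (NN (h + τ • w))) 0 = GG1 β κ (NN h) *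
      (2 * Sq h * (∑ k, 2 * h.1 k * w.1 k + ∑ k, 2 * h.2.1 k * w.2.1 k)
        + 2 * h.2.2 * w.2.2) := HasDerivAt.deriv hcomp
  rw [hval, hw]
  dsimp only
  simp only [Pi.single_apply, mul_ite, mul_one, mul_zero, Finset.sum_ite_eq',
    Finset.mem_univ, if_true, Pi.zero_apply, Finset.sum_const_zero]
  unfold PP
  ring

lemma XB_formula (hβ : 0 < β) (hκ : 0 < κ) (j : Fin n) {h : Hn n} (hh : 0 < NN h) :
    XB j (fun h' => GG β κ (NN h')) h = GG1 β κ (NN h) * QQ j h := by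
  have hdiff : DifferentiableAt ℝ (fun h' => GG β κ (NN h')) h := by
    have h1 := (hasDerivAt_GG hβ hκ hh).differentiableAt
    have h2 := diff_NN.differentiableAt (x := h)
    have h3 : DifferentiableAt ℝ (GG β κ ∘ NN) h := DifferentiableAt.comp h h1 h2
    exact h3
  unfold XB
  rw [fderiv_line hdiff]
  set w : Hn n := ((0 : Fin n → ℝ), (Pi.single j 1 : Fin n → ℝ), -(2 * h.1 j)) with hw
  have hG : HasDerivAt (GG β κ) (GG1 β κ (NN h)) ((fun τ : ℝ => NN (h + τ • w)) 0) := by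
    simpa using hasDerivAt_GG hβ hκ hh
  have hcomp := hG.comp 0 (line_NN h w)
  rw [Function.comp_def] at hcomp
  have hval : deriv (fun τ : ℝ => GG β κ (NN (h + τ • w))) 0 = GG1 β κ (NN h) *
      (2 * Sq h * (∑ k, 2 * h.1 k * w.1 k + ∑ k, 2 * h.2.1 k * w.2.1 k)
        + 2 * h.2.2 * w.2.2) := HasDerivAt.deriv hcomp
  rw [hval, hw]
  dsimp only
  simp only [Pi.single_apply, mul_ite, mul_one, mul_zero, Finset.sum_ite_eq',
    Finset.mem_univ, if_true, Pi.zero_apply, Finset.sum_const_zero]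
  unfold QQ
  ring

lemma XA2_formula (hβ : 0 < β) (hβ₂ : β < 2) (hκ : 0 < κ) (j : Fin n) {g : Hn n}
    (hg : 0 < NN g) :
    XA j (XA j (fun h' => GG β κ (NN h'))) g =
      GG2 β κ (NN g) * PP j g ^ 2
        + GG1 β κ (NN g) * (8 * g.1 j ^ 2 + 4 * Sq g + 8 * g.2.1 j ^ 2) := by
  have hopen : IsOpen {h : Hn n | 0 < NN h} := isOpen_lt continuous_const diff_NN.continuous
  have hev : (XA j fun h' => GG β κ (NN h')) =ᶠ[nhds g] fun h => GG1 β κ (NN h) * PP j h := by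
    filter_upwards [hopen.mem_nhds hg] with h hh
    exact XA_formula hβ hκ j hh
  show fderiv ℝ (XA j fun h' => GG β κ (NN h')) g
      ((Pi.single j 1 : Fin n → ℝ), (0 : Fin n → ℝ), 2 * g.2.1 j) = _
  rw [hev.fderiv_eq]
  have hdiffΦ : DifferentiableAt ℝ (fun h => GG1 β κ (NN h) * PP j h) g := by
    have h1 := (hasDerivAt_GG1 hβ hβ₂ hκ hg).differentiableAt
    have h2 := diff_NN.differentiableAt (x := g)
    have h3 : DifferentiableAt ℝ (GG1 β κ ∘ NN) g := DifferentiableAt.comp g h1 h2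
    exact (h3.mul ((diff_PP j).differentiableAt) :)
  rw [fderiv_line hdiffΦ]
  set w : Hn n := ((Pi.single j 1 : Fin n → ℝ), (0 : Fin n → ℝ), 2 * g.2.1 j) with hw
  have hG1 : HasDerivAt (GG1 β κ) (GG2 β κ (NN g)) ((fun τ : ℝ => NN (g + τ • w)) 0) := by
    simpa using hasDerivAt_GG1 hβ hβ₂ hκ hg
  have hcomp := (hG1.comp 0 (line_NN g w)).mul (line_PP j g w)
  have h0 : g + (0:ℝ) • w = g := by simp
  rw [Function.comp_def] at hcomp
  simp only [h0] at hcomp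
  have hval : deriv (fun τ : ℝ => GG1 β κ (NN (g + τ • w)) * PP j (g + τ • w)) 0 =
      GG2 β κ (NN g) *
        (2 * Sq g * (∑ k, 2 * g.1 k * w.1 k + ∑ k, 2 * g.2.1 k * w.2.1 k)
          + 2 * g.2.2 * w.2.2) * PP j g
      + GG1 β κ (NN g) *
        (4 * ((∑ k, 2 * g.1 k * w.1 k + ∑ k, 2 * g.2.1 k * w.2.1 k) * g.1 j + Sq g * w.1 j)
          + 4 * (w.2.2 * g.2.1 j + g.2.2 * w.2.1 j)) := HasDerivAt.deriv hcomp
  rw [hval, hw]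
  dsimp only
  simp only [Pi.single_apply, mul_ite, mul_one, mul_zero, Finset.sum_ite_eq',
    Finset.mem_univ, if_true, Pi.zero_apply, Finset.sum_const_zero]
  unfold PP
  ring

lemma XB2_formula (hβ : 0 < β) (hβ₂ : β < 2) (hκ : 0 < κ) (j : Fin n) {g : Hn n}
    (hg : 0 < NN g) :
    XB j (XB j (fun h' => GG β κ (NN h'))) g =
      GG2 β κ (NN g) * QQ j g ^ 2
        + GG1 β κ (NN g) * (8 * g.2.1 j ^ 2 + 4 * Sq g + 8 * g.1 j ^ 2) := by
  have hopen : IsOpen {h : Hn n | 0 < NN h} := isOpen_lt continuous_const diff_NN.continuous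
  have hev : (XB j fun h' => GG β κ (NN h')) =ᶠ[nhds g] fun h => GG1 β κ (NN h) * QQ j h := by
    filter_upwards [hopen.mem_nhds hg] with h hh
    exact XB_formula hβ hκ j hh
  show fderiv ℝ (XB j fun h' => GG β κ (NN h')) g
      ((0 : Fin n → ℝ), (Pi.single j 1 : Fin n → ℝ), -(2 * g.1 j)) = _
  rw [hev.fderiv_eq]
  have hdiffΦ : DifferentiableAt ℝ (fun h => GG1 β κ (NN h) * QQ j h) g := by
    have h1 := (hasDerivAt_GG1 hβ hβ₂ hκ hg).differentiableAt
    have h2 := diff_NN.differentiableAt (x := g)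
    have h3 : DifferentiableAt ℝ (GG1 β κ ∘ NN) g := DifferentiableAt.comp g h1 h2
    exact (h3.mul ((diff_QQ j).differentiableAt) :)
  rw [fderiv_line hdiffΦ]
  set w : Hn n := ((0 : Fin n → ℝ), (Pi.single j 1 : Fin n → ℝ), -(2 * g.1 j)) with hw
  have hG1 : HasDerivAt (GG1 β κ) (GG2 β κ (NN g)) ((fun τ : ℝ => NN (g + τ • w)) 0) := by
    simpa using hasDerivAt_GG1 hβ hβ₂ hκ hg
  have hcomp := (hG1.comp 0 (line_NN g w)).mul (line_QQ j g w)
  have h0 : g + (0:ℝ) • w = g := by simp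
  rw [Function.comp_def] at hcomp
  simp only [h0] at hcomp
  have hval : deriv (fun τ : ℝ => GG1 β κ (NN (g + τ • w)) * QQ j (g + τ • w)) 0 =
      GG2 β κ (NN g) *
        (2 * Sq g * (∑ k, 2 * g.1 k * w.1 k + ∑ k, 2 * g.2.1 k * w.2.1 k)
          + 2 * g.2.2 * w.2.2) * QQ j g
      + GG1 β κ (NN g) *
        (4 * ((∑ k, 2 * g.1 k * w.1 k + ∑ k, 2 * g.2.1 k * w.2.1 k) * g.2.1 j + Sq g * w.2.1 j)
          - 4 * (w.2.2 * g.1 j + g.2.2 * w.1 j)) := HasDerivAt.deriv hcomp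
  rw [hval, hw]
  dsimp only
  simp only [Pi.single_apply, mul_ite, mul_one, mul_zero, Finset.sum_ite_eq',
    Finset.mem_univ, if_true, Pi.zero_apply, Finset.sum_const_zero]
  unfold QQ
  ring

end Formulas

end MultiVar

/-- for `0 < β < 2`, the radial function `v` solves
`-Δ_{ℍⁿ} v + |g|^{β-2} ψ v = 0` on `ℍⁿ \ {0}`. -/
theorem vSol_solves (n : ℕ) (hn : 0 < n) (β : ℝ) (hβ₀ : 0 < β) (hβ₂ : β < 2)
    (g : Hn n) (hg : g ≠ 0) :
    -subLap (vSol n β) g + hnorm g ^ (β - 2) * psi g * vSol n β g = 0 := by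
  set κ : ℝ := (Qd n - 2) / β with hκdef
  have hQ : Qd n - 2 = 2 * (n:ℝ) := by unfold Qd; ring
  have hnpos : (0:ℝ) < n := by exact_mod_cast hn
  have hκ : 0 < κ := by rw [hκdef, hQ]; positivity
  have hβκ : β * κ = 2 * (n:ℝ) := by rw [hκdef, mul_div_cancel₀ _ (ne_of_gt hβ₀), hQ]
  have hvs : vSol n β = fun h : Hn n => GG β κ (NN h) := by
    funext h
    unfold vSol GG
    refine tsum_congr fun m => ?_
    have hnum : hnorm h ^ (β * (m:ℝ)) = NN h ^ (β * (m:ℝ) / 4) := by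
      rw [hnorm_eq, ← Real.rpow_mul (NN_nonneg h)]
      congr 1
      ring
    rw [hnum, hκdef]
    rfl
  have hNg : 0 < NN g := NN_pos g hg
  rw [hvs]
  beta_reduce
  unfold subLap
  rw [Finset.sum_congr rfl (fun j _ => XA2_formula hβ₀ hβ₂ hκ j hNg),
      Finset.sum_congr rfl (fun j _ => XB2_formula hβ₀ hβ₂ hκ j hNg)]
  have e1 : ∑ j, (g.1 j ^ 2 + g.2.1 j ^ 2) = Sq g := by
    unfold Sq
    rw [Finset.sum_add_distrib]
  have hsum : (∑ j, (GG2 β κ (NN g) * PP j g ^ 2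
        + GG1 β κ (NN g) * (8 * g.1 j ^ 2 + 4 * Sq g + 8 * g.2.1 j ^ 2)))
      + (∑ j, (GG2 β κ (NN g) * QQ j g ^ 2
        + GG1 β κ (NN g) * (8 * g.2.1 j ^ 2 + 4 * Sq g + 8 * g.1 j ^ 2)))
      = Sq g * (16 * NN g * GG2 β κ (NN g) + (4 * β * κ + 16) * GG1 β κ (NN g)) := by
    rw [← Finset.sum_add_distrib]
    have hterm : ∀ j : Fin n,
        (GG2 β κ (NN g) * PP j g ^ 2
          + GG1 β κ (NN g) * (8 * g.1 j ^ 2 + 4 * Sq g + 8 * g.2.1 j ^ 2))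
        + (GG2 β κ (NN g) * QQ j g ^ 2
          + GG1 β κ (NN g) * (8 * g.2.1 j ^ 2 + 4 * Sq g + 8 * g.1 j ^ 2))
        = (16 * NN g * GG2 β κ (NN g)) * (g.1 j ^ 2 + g.2.1 j ^ 2)
          + GG1 β κ (NN g) * (16 * (g.1 j ^ 2 + g.2.1 j ^ 2) + 8 * Sq g) := fun j => by
      unfold PP QQ NN
      ring
    rw [Finset.sum_congr rfl (fun j _ => hterm j), Finset.sum_add_distrib,
      ← Finset.mul_sum, e1, ← Finset.mul_sum]
    have e2 : ∑ j : Fin n, (16 * (g.1 j ^ 2 + g.2.1 j ^ 2) + 8 * Sq g)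
        = 16 * Sq g + 8 * n * Sq g := by
      rw [Finset.sum_add_distrib, ← Finset.mul_sum, e1, Finset.sum_const,
        Finset.card_univ, Fintype.card_fin, nsmul_eq_mul]
      ring
    rw [e2]
    linear_combination (-4 * Sq g * GG1 β κ (NN g)) * hβκ
  rw [hsum, ode_identity hβ₀ hβ₂ hκ hNg]
  have hψ : psi g = Sq g / NN g ^ ((1:ℝ)/2) := by
    unfold psi Sq
    rw [hnorm_eq]
    congr 1
    rw [← Real.rpow_natCast (NN g ^ ((1:ℝ)/4)) 2, ← Real.rpow_mul (NN_nonneg g)]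
    norm_num
  have hβ2r : hnorm g ^ (β - 2) = NN g ^ ((β - 2)/4) := by
    rw [hnorm_eq, ← Real.rpow_mul (NN_nonneg g)]
    congr 1
    ring
  rw [hψ, hβ2r]
  have hcomb : NN g ^ ((β - 2)/4) * (Sq g / NN g ^ ((1:ℝ)/2))
      = Sq g * NN g ^ ((β - 4)/4) := by
    have hd : NN g ^ ((β - 2)/4) / NN g ^ ((1:ℝ)/2) = NN g ^ ((β - 4)/4) := by
      rw [← Real.rpow_sub hNg, show (β - 2)/4 - (1:ℝ)/2 = (β - 4)/4 from by ring]
    calc NN g ^ ((β - 2)/4) * (Sq g / NN g ^ ((1:ℝ)/2))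
        = Sq g * (NN g ^ ((β - 2)/4) / NN g ^ ((1:ℝ)/2)) := by ring
      _ = Sq g * NN g ^ ((β - 4)/4) := by rw [hd]
  rw [hcomb]
  ring

end Heisenberg
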